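/- arXiv:1804.09701 — 3 statements merged into one kernel-verified Lean document; each statement's English description precedes it below -/
import Mathlib

section
/- If v is a nonzero vector of an n-dimensional vector space V over the field with 2 elements whose support (set of basis vectors with nonzero coefficient) has size s, then the degree of v in the non-zero component graph G(V) is (2^s - 1)·2^(n-s) - 1. -/
open Finset

/-- Vertices of the non-zero component graph: nonzero vectors of `V = (Fin n → ZMod 2)`. -/
abbrev Vtx (n : ℕ) := {v : Fin n → ZMod 2 // v ≠ 0}

/-- The support (skeleton) of a vector: basis vectors with nonzero coefficient. -/
def supp {n : ℕ} (v : Fin n → ZMod 2) : Finset (Fin n) :=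
  Finset.univ.filter (fun i => v i ≠ 0)

/-- The non-zero component graph of an `n`-dimensional vector space over `F_2`:
two distinct nonzero vectors are adjacent iff their supports intersect. -/
def NZC (n : ℕ) : SimpleGraph (Vtx n) where
  Adj u v := u ≠ v ∧ ∃ i, u.1 i ≠ 0 ∧ v.1 i ≠ 0
  symm := by
    refine ⟨?_⟩
    rintro u v ⟨h1, i, h2, h3⟩
    exact ⟨h1.symm, i, h3, h2⟩
  loopless := by
    refine ⟨?_⟩
    rintro u ⟨h, -⟩
    exact h rfl

instance {n : ℕ} : DecidableRel (NZC n).Adj := fun u v =>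
  decidable_of_iff (u ≠ v ∧ ∃ i, u.1 i ≠ 0 ∧ v.1 i ≠ 0) Iff.rfl

lemma card_vanish (n : ℕ) (S : Finset (Fin n)) :
    Fintype.card {f : Fin n → ZMod 2 // ∀ i ∈ S, f i = 0} = 2 ^ (n - S.card) := by
  classical
  have e : {f : Fin n → ZMod 2 // ∀ i ∈ S, f i = 0} ≃ ({i : Fin n // i ∉ S} → ZMod 2) :=
    { toFun := fun f i => f.1 i.1
      invFun := fun g => ⟨fun i => if h : i ∈ S then 0 else g ⟨i, h⟩, fun i hi => by simp [hi]⟩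
      left_inv := by
        rintro ⟨f, hf⟩
        ext i
        by_cases h : i ∈ S <;> simp [h, hf i]
      right_inv := by
        intro g
        ext i
        simp [i.2] }
  have hc : Fintype.card {i : Fin n // i ∉ S} = n - S.card := by
    simp [Fintype.card_subtype, Finset.filter_not, Finset.card_sdiff_of_subset (Finset.filter_subset _ _),
      Finset.filter_mem_eq_inter, Finset.card_sdiff_of_subset (Finset.subset_univ S)]
  rw [Fintype.card_congr e, Fintype.card_fun, hc]
  norm_num

/-- The degree of a vertex with support of size `s` is `(2^s - 1) * 2^(n-s) - 1`. -/
theorem degree_eq (n : ℕ) (v : Vtx n) :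
    (NZC n).degree v = (2 ^ (supp v.1).card - 1) * 2 ^ (n - (supp v.1).card) - 1 := by
  classical
  set S := supp v.1 with hS
  set P : (Fin n → ZMod 2) → Prop := fun f => ∃ i, v.1 i ≠ 0 ∧ f i ≠ 0 with hP
  have hPv : P v.1 := by
    obtain ⟨i, hi⟩ := Function.ne_iff.mp v.2
    exact ⟨i, hi, hi⟩
  have e1 : (NZC n).neighborSet v ≃ {f : Fin n → ZMod 2 // f ≠ v.1 ∧ P f} :=
    { toFun := fun u => ⟨u.1.1, fun h => u.2.1 (Subtype.ext h.symm), u.2.2⟩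
      invFun := fun f => ⟨⟨f.1, fun h0 => by
          obtain ⟨i, _, hfi⟩ := f.2.2
          exact hfi (by rw [h0]; rfl)⟩,
        fun h => f.2.1 (congrArg Subtype.val h).symm, f.2.2⟩
      left_inv := fun u => rfl
      right_inv := fun f => rfl }
  have hdeg : (NZC n).degree v = Fintype.card {f : Fin n → ZMod 2 // f ≠ v.1 ∧ P f} := by
    rw [← SimpleGraph.card_neighborSet_eq_degree, Fintype.card_congr e1]
  have hfilter : (Finset.univ.filter (fun f : Fin n → ZMod 2 => f ≠ v.1 ∧ P f))
      = (Finset.univ.filter P).erase v.1 := by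
    ext f
    simp [Finset.mem_erase, and_comm]
  have hcardP : (Finset.univ.filter P).card = 2 ^ n - 2 ^ (n - S.card) := by
    have hsplit := Finset.card_filter_add_card_filter_not
      (s := (Finset.univ : Finset (Fin n → ZMod 2))) (p := P)
    have hneg : (Finset.univ.filter (fun f : Fin n → ZMod 2 => ¬ P f)).card
        = 2 ^ (n - S.card) := by
      rw [← card_vanish n S, Fintype.card_subtype]
      congr 1
      ext f
      simp only [hP, hS, supp, Finset.mem_filter, Finset.mem_univ, true_and]
      push_neg
      constructor
      · intro h i hi; exact h i hi
      · intro h i hi; exact h i hi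
    have huniv : (Finset.univ : Finset (Fin n → ZMod 2)).card = 2 ^ n := by
      simp [Fintype.card_fun]
    omega
  have hvmem : v.1 ∈ Finset.univ.filter P := by simp [hPv]
  have hsn : S.card ≤ n := by
    simpa using Finset.card_le_univ S
  rw [hdeg, Fintype.card_subtype, hfilter, Finset.card_erase_of_mem hvmem, hcardP]
  congr 1
  rw [Nat.sub_one_mul, ← pow_add, Nat.add_sub_cancel' hsn]
end

section
/- For every positive integer N there exists a finite graph G such that fxd(G) − fix(G) ≥ N, where fix(G) is the fixing number (minimum size of a set of vertices whose pointwise stabilizer in Aut(G) is trivial) and fxd(G) is the fixed number (minimum k such that every k-subset of vertices is a fixing set). -/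
/-- `D` is a fixing set of `G` if the only automorphism of `G` fixing
every vertex of `D` is the identity. -/
def IsFixingSet {V : Type*} (G : SimpleGraph V) (D : Set V) : Prop :=
  ∀ g : G ≃g G, (∀ v ∈ D, g v = v) → ∀ v, g v = v

/-- The fixing number: minimum cardinality of a fixing set. -/
noncomputable def fixingNumber {V : Type*} [Fintype V] (G : SimpleGraph V) : ℕ :=
  sInf {k | ∃ D : Finset V, D.card = k ∧ IsFixingSet G ↑D}

/-- The fixed number: minimum `k` such that every `k`-subset of vertices is a fixing set. -/
noncomputable def fixedNumber {V : Type*} [Fintype V] (G : SimpleGraph V) : ℕ :=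
  sInf {k | ∀ D : Finset V, D.card = k → IsFixingSet G ↑D}

namespace FxdFixAux

/-- Disjoint union of `m+1` stars `K_{1,2}`: in each copy, vertex `(i,0)` is the
center, `(i,1)` and `(i,2)` are leaves. -/
def G (m : ℕ) : SimpleGraph (Fin (m+1) × Fin 3) where
  Adj x y := x.1 = y.1 ∧ ((x.2 = 0 ∧ ¬ y.2 = 0) ∨ (¬ x.2 = 0 ∧ y.2 = 0))
  symm := ⟨by rintro x y ⟨h1, h2⟩; exact ⟨h1.symm, by tauto⟩⟩
  loopless := ⟨by rintro x ⟨h1, h2⟩; tauto⟩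

@[simp] lemma G_adj {m : ℕ} (x y : Fin (m+1) × Fin 3) :
    (G m).Adj x y ↔ x.1 = y.1 ∧ ((x.2 = 0 ∧ ¬ y.2 = 0) ∨ (¬ x.2 = 0 ∧ y.2 = 0)) :=
  Iff.rfl

/-- The map swapping the two leaves of star `0`. -/
def sw {m : ℕ} (x : Fin (m+1) × Fin 3) : Fin (m+1) × Fin 3 :=
  (x.1, if x.1 = 0 then ![0, 2, 1] x.2 else x.2)

@[simp] lemma sw_fst {m : ℕ} (x : Fin (m+1) × Fin 3) : (sw x).1 = x.1 := rfl

lemma sw_snd_eq_zero {m : ℕ} (x : Fin (m+1) × Fin 3) : (sw x).2 = 0 ↔ x.2 = 0 := by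
  have h3 : ∀ a : Fin 3, (![0, 2, 1] : Fin 3 → Fin 3) a = 0 ↔ a = 0 := by decide
  by_cases h : x.1 = 0
  · simp only [sw, h, if_pos]
    exact h3 x.2
  · simp [sw, h]

lemma sw_invol {m : ℕ} : Function.Involutive (sw (m := m)) := by
  intro x
  have h3 : ∀ a : Fin 3, ![0, 2, 1] (![0, 2, 1] a) = a := by decide
  by_cases h : x.1 = 0
  · simp only [sw, h, if_pos, sw_fst, h3]
    exact Prod.ext h.symm rfl
  · simp [sw, h]

lemma sw_fix {m : ℕ} (x : Fin (m+1) × Fin 3) (h1 : x ≠ (0, 1)) (h2 : x ≠ (0, 2)) :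
    sw x = x := by
  by_cases h : x.1 = 0
  · have ha : x.2 ≠ 1 := fun hc => h1 (Prod.ext h hc)
    have hb : x.2 ≠ 2 := fun hc => h2 (Prod.ext h hc)
    have h3 : ∀ a : Fin 3, a ≠ 1 → a ≠ 2 → ![0, 2, 1] a = a := by decide
    simp only [sw, h, if_pos, h3 x.2 ha hb]
    exact Prod.ext h.symm rfl
  · simp [sw, h]

lemma sw_ne : ∀ {m : ℕ}, sw (m := m) (0, 1) ≠ (0, 1) := by
  intro m hc
  have : (![0, 2, 1] 1 : Fin 3) = 1 := by
    have := congrArg Prod.snd hc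
    simpa [sw] using this
  exact absurd this (by decide)

/-- The automorphism of `G m` swapping the two leaves of star `0`. -/
def σ (m : ℕ) : G m ≃g G m where
  toEquiv := sw_invol.toPerm
  map_rel_iff' := by
    intro x y
    simp only [Function.Involutive.coe_toPerm, G_adj, sw_fst, sw_snd_eq_zero]

@[simp] lemma σ_apply {m : ℕ} (x : Fin (m+1) × Fin 3) : σ m x = sw x := rfl

end FxdFixAux

open FxdFixAux in
/-- For every positive integer `N` there is a finite graph `G` with
`fxd(G) - fix(G) ≥ N`. -/
theorem exists_graph_fxd_sub_fix_ge (N : ℕ) (hN : 0 < N) :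
    ∃ (V : Type) (_ : Fintype V) (G : SimpleGraph V),
      N ≤ fixedNumber G - fixingNumber G := by
  refine ⟨Fin (N+1) × Fin 3, inferInstance, G N, ?_⟩
  -- the fixing set: everything except one leaf per star
  set D : Finset (Fin (N+1) × Fin 3) := Finset.univ ×ˢ ({0, 1} : Finset (Fin 3)) with hD
  have hDcard : D.card = (N+1) * 2 := by
    rw [hD, Finset.card_product]
    simp
  have hDfix : IsFixingSet (G N) ↑D := by
    intro g hg
    have hmem : ∀ x : Fin (N+1) × Fin 3, x.2 ≠ 2 → g x = x := by
      intro x hx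
      apply hg
      simp only [hD, Finset.coe_product, Set.mem_prod, Finset.coe_insert,
        Finset.coe_singleton, Set.mem_insert_iff, Set.mem_singleton_iff,
        Finset.coe_univ, Set.mem_univ, true_and]
      revert hx; clear hg
      obtain ⟨i, a⟩ := x
      fin_cases a <;> simp
    intro v
    by_cases hv : v.2 = 2
    · -- v = (i, 2); show g v = v
      obtain ⟨i, a⟩ := v
      simp only at hv
      subst hv
      set y := g (i, 2) with hy
      have hy2 : y.2 = 2 := by
        by_contra h
        have h1 : g y = y := hmem y h
        have h2 : y = (i, 2) := g.injective (by rw [h1, hy])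
        rw [h2] at h
        exact h rfl
      have hadj : (G N).Adj (i, (2 : Fin 3)) (i, 0) :=
        ⟨rfl, Or.inr ⟨show ¬(2 : Fin 3) = 0 by decide, rfl⟩⟩
      have hadj2 : (G N).Adj y (i, 0) := by
        have h4 := g.map_rel_iff.mpr hadj
        rwa [← hy, hmem (i, 0) (show ¬(0 : Fin 3) = 2 by decide)]
          at h4
      have hy1 : y.1 = i := hadj2.1
      exact Prod.ext hy1 hy2
    · exact hmem v hv
  have hfixle : fixingNumber (G N) ≤ (N+1) * 2 :=
    Nat.sInf_le ⟨D, hDcard, hDfix⟩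
  -- lower bound for fixedNumber
  have hcardV : Fintype.card (Fin (N+1) × Fin 3) = (N+1) * 3 := by simp
  set S : Set ℕ := {k | ∀ D : Finset (Fin (N+1) × Fin 3), D.card = k → IsFixingSet (G N) ↑D}
    with hS
  have hSne : S.Nonempty := by
    refine ⟨(N+1) * 3, ?_⟩
    intro E hE g hg v
    have : E = Finset.univ := Finset.eq_univ_of_card E (by rw [hE, hcardV])
    exact hg v (by simp [this])
  have hSlb : ∀ j ∈ S, (N+1) * 3 - 1 ≤ j := by
    intro j hj
    by_contra hcon
    push_neg at hcon
    -- the bad set: everything except the two leaves of star 0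
    set B : Finset (Fin (N+1) × Fin 3) :=
      Finset.univ \ {((0 : Fin (N+1)), (1 : Fin 3)), ((0 : Fin (N+1)), (2 : Fin 3))} with hB
    have hne12 : ((0 : Fin (N+1)), (1 : Fin 3)) ≠ ((0 : Fin (N+1)), (2 : Fin 3)) := by
      intro h
      have h2 : (1 : Fin 3) = 2 := congrArg Prod.snd h
      exact absurd h2 (by decide)
    have hBcard : B.card = (N+1) * 3 - 2 := by
      rw [hB, Finset.card_sdiff_of_subset (Finset.subset_univ _), Finset.card_univ, hcardV,
        Finset.card_pair hne12]
    have hjB : j ≤ B.card := by omega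
    obtain ⟨B', hB'sub, hB'card⟩ := Finset.exists_subset_card_eq hjB
    have hB'fix : IsFixingSet (G N) ↑B' := hj B' hB'card
    have : ∀ v, σ N v = v := by
      apply hB'fix
      intro v hv
      have hvB : v ∈ B := hB'sub hv
      rw [hB, Finset.mem_sdiff, Finset.mem_insert, Finset.mem_singleton] at hvB
      push_neg at hvB
      simpa using sw_fix v hvB.2.1 hvB.2.2
    exact sw_ne (by simpa using this ((0 : Fin (N+1)), (1 : Fin 3)))
  have hfxdge : (N+1) * 3 - 1 ≤ fixedNumber (G N) :=
    hSlb _ (Nat.sInf_mem hSne)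
  omega
end

section
/- Let G be a connected graph of order n with fix(G) = fxd(G) = k. Then the fixing graph F(G) has at most n·(C(n,2) − k + 1) edges. -/
/-- The orbit of `v` under the automorphism group of `G`. -/
def autOrbit {V : Type*} (G : SimpleGraph V) (v : V) : Set V :=
  {w | ∃ g : G ≃g G, g v = w}

/-- The orbit of `v` under the stabilizer of `x` in the automorphism group of `G`. -/
def stabOrbit {V : Type*} (G : SimpleGraph V) (x v : V) : Set V :=
  {w | ∃ g : G ≃g G, g x = x ∧ g v = w}

/-- `S(G)`: the set of vertices with orbit of size at least 2. -/
def movable {V : Type*} (G : SimpleGraph V) : Set V :=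
  {v | ∃ g : G ≃g G, g v ≠ v}

/-- The number of edges of the fixing graph `F(G)`: edges join a vertex `x ∈ S(G)` to an
(unordered) pair `{u, v}` of distinct vertices of `S(G)` with equal orbits such that the
orbits of `u` and `v` under the stabilizer of `x` differ. -/
noncomputable def fixingGraphEdges {V : Type*} (G : SimpleGraph V) : ℕ :=
  Set.ncard {p : V × Sym2 V | ∃ u v, p.2 = s(u, v) ∧ u ≠ v ∧
    u ∈ movable G ∧ v ∈ movable G ∧ autOrbit G u = autOrbit G v ∧
    p.1 ∈ movable G ∧ stabOrbit G p.1 u ≠ stabOrbit G p.1 v}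

section Aux

variable {V : Type*} (G : SimpleGraph V)

private lemma mem_stabOrbit_self (x v : V) : v ∈ stabOrbit G x v :=
  ⟨RelIso.refl _, rfl, rfl⟩

private lemma stabOrbit_self_eq (x : V) : stabOrbit G x x = {x} := by
  ext z
  constructor
  · rintro ⟨g, h1, h2⟩
    rw [Set.mem_singleton_iff, ← h2, h1]
  · intro h
    rw [Set.mem_singleton_iff] at h
    subst h
    exact mem_stabOrbit_self G _ _

private lemma stabOrbit_apply (g : G ≃g G) {x : V} (hx : g x = x) (w : V) :
    stabOrbit G x (g w) = stabOrbit G x w := by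
  have hsymm : g.symm x = x := by
    conv_lhs => rw [← hx]
    exact g.symm_apply_apply x
  ext z
  constructor
  · rintro ⟨h, h1, h2⟩
    exact ⟨g.trans h, by simp [RelIso.trans_apply, hx, h1], by
      simp [RelIso.trans_apply, h2]⟩
  · rintro ⟨h, h1, h2⟩
    exact ⟨(g.symm.trans h : G ≃g G), by simp [RelIso.trans_apply, hsymm, h1], by
      simp [RelIso.trans_apply, g.symm_apply_apply, h2]⟩

private lemma autOrbit_apply (g : G ≃g G) (w : V) :
    autOrbit G (g w) = autOrbit G w := by
  ext z
  constructor
  · rintro ⟨h, h2⟩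
    exact ⟨g.trans h, by simp [RelIso.trans_apply, h2]⟩
  · rintro ⟨h, h2⟩
    exact ⟨(g.symm.trans h : G ≃g G), by
      simp [RelIso.trans_apply, g.symm_apply_apply, h2]⟩

end Aux

/-- If `G` is a connected graph of order `n` with `fix(G) = fxd(G) = k`, then its fixing
graph has at most `n * (C(n,2) - k + 1)` edges. -/
theorem fixingGraph_edge_bound {V : Type*} [Fintype V] (G : SimpleGraph V) (n k : ℕ)
    (hconn : G.Connected) (hn : Fintype.card V = n)
    (hfix : fixingNumber G = k) (hfxd : fixedNumber G = k) :
    fixingGraphEdges G ≤ n * (n.choose 2 - k + 1) := by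
  classical
  subst hn
  set n := Fintype.card V with hn
  -- the pair side of the fixing graph
  set inVs : Sym2 V → Prop := fun s => ∃ u v, s = s(u, v) ∧ u ≠ v ∧
    u ∈ movable G ∧ v ∈ movable G ∧ autOrbit G u = autOrbit G v with hinVs
  set sep : V → Sym2 V → Prop := fun x s => ∃ u v, s = s(u, v) ∧
    stabOrbit G x u ≠ stabOrbit G x v with hsepdef
  set Vs : Finset (Sym2 V) := Finset.univ.filter inVs with hVs
  set Fx : V → Finset (Sym2 V) := fun x => Finset.univ.filter (fun s => ∃ u v,
     s = s(u, v) ∧ u ≠ v ∧ u ∈ movable G ∧ v ∈ movable G ∧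
     autOrbit G u = autOrbit G v ∧ x ∈ movable G ∧
     stabOrbit G x u ≠ stabOrbit G x v) with hFx
  set Bx : V → Finset (Sym2 V) := fun x => Vs.filter (fun s => ¬ sep x s) with hBx
  -- key claim: every vertex leaves at least `k - 1` pairs unseparated
  have hkB : ∀ x : V, k ≤ (Bx x).card + 1 := by
    intro x
    set pick : Sym2 V → V := fun s =>
      if h : ∃ u v, s = s(u, v) ∧ u ≠ v then h.choose else x with hpick
    set D : Finset V := insert x ((Bx x).image pick) with hD
    have hDfix : IsFixingSet G ↑D := by
      intro g hg
      by_contra hcon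
      push_neg at hcon
      obtain ⟨w, hw⟩ := hcon
      have hgx : g x = x := hg x (by simp [hD])
      have key : ∀ y u v : V, g y = y → s(u, v) = s(w, g w) →
          stabOrbit G y u = stabOrbit G y v := by
        intro y u v hy hm
        rw [Sym2.eq_iff] at hm
        have h1 : stabOrbit G y (g w) = stabOrbit G y w := stabOrbit_apply G g hy w
        rcases hm with ⟨rfl, rfl⟩ | ⟨hu, hv⟩
        · exact h1.symm
        · rw [hu, hv]; exact h1
      have hsmem : s(w, g w) ∈ Vs := by
        simp only [hVs, Finset.mem_filter, Finset.mem_univ, true_and, hinVs]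
        refine ⟨w, g w, rfl, Ne.symm hw, ⟨g, hw⟩, ⟨g.symm, ?_⟩,
          (autOrbit_apply G g w).symm⟩
        rw [g.symm_apply_apply]
        exact Ne.symm hw
      by_cases hB : s(w, g w) ∈ Bx x
      · have hex : ∃ u v, s(w, g w) = s(u, v) ∧ u ≠ v :=
          ⟨w, g w, rfl, Ne.symm hw⟩
        have hpv : pick (s(w, g w)) = hex.choose := by
          rw [hpick]
          exact dif_pos hex
        have hp : pick (s(w, g w)) ∈ D := by
          rw [hD]
          exact Finset.mem_insert_of_mem (Finset.mem_image_of_mem _ hB)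
        have hgy : g hex.choose = hex.choose := by
          rw [← hpv]; exact hg _ hp
        obtain ⟨v₀, hs₀, hne₀⟩ := hex.choose_spec
        have := key hex.choose hex.choose v₀ hgy hs₀.symm
        have hv₀ : v₀ ∈ stabOrbit G hex.choose hex.choose := by
          rw [this]; exact mem_stabOrbit_self G _ _
        rw [stabOrbit_self_eq, Set.mem_singleton_iff] at hv₀
        exact hne₀ hv₀.symm
      · have hsep' : sep x (s(w, g w)) := by
          by_contra hns
          exact hB (Finset.mem_filter.mpr ⟨hsmem, hns⟩)
        obtain ⟨u, v, hm, hne⟩ := hsep'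
        exact hne (key x u v hgx hm.symm)
    have h1 : fixingNumber G ≤ D.card := Nat.sInf_le ⟨D, rfl, hDfix⟩
    have h2 : D.card ≤ (Bx x).card + 1 := by
      calc D.card ≤ ((Bx x).image pick).card + 1 := Finset.card_insert_le _ _
        _ ≤ (Bx x).card + 1 := by
            exact Nat.add_le_add_right Finset.card_image_le 1
    omega
  -- the pair side has at most `choose n 2` vertices
  have hVsC : Vs.card ≤ n.choose 2 := by
    have hsub : Vs ⊆ Finset.univ.filter (fun s : Sym2 V => ¬ s.IsDiag) := by
      intro s hs
      simp only [hVs, Finset.mem_filter, Finset.mem_univ, true_and, hinVs] at hs ⊢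
      obtain ⟨u, v, rfl, hne, -⟩ := hs
      simp [Sym2.mk_isDiag_iff, hne]
    have h1 := Finset.card_le_card hsub
    have h2 : (Finset.univ.filter (fun s : Sym2 V => ¬ s.IsDiag)).card = n.choose 2 := by
      rw [← Sym2.card_subtype_not_diag (α := V)]
      exact (Fintype.card_subtype _).symm
    rwa [h2] at h1
  -- each vertex separates at most `choose n 2 - k + 1` pairs
  have hFxcard : ∀ x : V, (Fx x).card ≤ n.choose 2 - k + 1 := by
    intro x
    have hsub : Fx x ⊆ Vs \ Bx x := by
      intro s hs
      simp only [hFx, Finset.mem_filter, Finset.mem_univ, true_and] at hs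
      obtain ⟨u, v, hm, hne, hu, hv, ho, hx, hst⟩ := hs
      have h1 : s ∈ Vs := by
        simp only [hVs, Finset.mem_filter, Finset.mem_univ, true_and, hinVs]
        exact ⟨u, v, hm, hne, hu, hv, ho⟩
      have h2 : sep x s := ⟨u, v, hm, hst⟩
      rw [Finset.mem_sdiff]
      refine ⟨h1, fun hBm => ?_⟩
      rw [hBx, Finset.mem_filter] at hBm
      exact hBm.2 h2
    have h3 : (Fx x).card ≤ Vs.card - (Bx x).card := by
      calc (Fx x).card ≤ (Vs \ Bx x).card := Finset.card_le_card hsub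
        _ = Vs.card - (Bx x).card := Finset.card_sdiff_of_subset (Finset.filter_subset _ _)
    have h4 := hkB x
    have hBle : (Bx x).card ≤ Vs.card := Finset.card_le_card (Finset.filter_subset _ _)
    omega
  -- assemble the count
  have hE : fixingGraphEdges G ≤ ∑ x : V, (Fx x).card := by
    rw [fixingGraphEdges, Set.ncard_eq_toFinset_card']
    have hsub : (Set.toFinset {p : V × Sym2 V | ∃ u v, p.2 = s(u, v) ∧ u ≠ v ∧
        u ∈ movable G ∧ v ∈ movable G ∧ autOrbit G u = autOrbit G v ∧
        p.1 ∈ movable G ∧ stabOrbit G p.1 u ≠ stabOrbit G p.1 v}) ⊆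
        Finset.univ.biUnion (fun x => (Fx x).image (fun s => (x, s))) := by
      rintro ⟨a, b⟩ hp
      rw [Set.mem_toFinset] at hp
      simp only [Set.mem_setOf_eq] at hp
      apply Finset.mem_biUnion.mpr
      refine ⟨a, Finset.mem_univ _, ?_⟩
      apply Finset.mem_image.mpr
      refine ⟨b, ?_, rfl⟩
      simp only [hFx, Finset.mem_filter, Finset.mem_univ, true_and]
      exact hp
    calc _ ≤ (Finset.univ.biUnion (fun x => (Fx x).image (fun s => (x, s)))).card :=
          Finset.card_le_card hsub
      _ ≤ ∑ x : V, ((Fx x).image (fun s => (x, s))).card := Finset.card_biUnion_le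
      _ ≤ ∑ x : V, (Fx x).card := Finset.sum_le_sum (fun x _ => Finset.card_image_le)
  calc fixingGraphEdges G ≤ ∑ x : V, (Fx x).card := hE
    _ ≤ ∑ _x : V, (n.choose 2 - k + 1) := Finset.sum_le_sum (fun x _ => hFxcard x)
    _ = n * (n.choose 2 - k + 1) := by
        rw [Finset.sum_const, Finset.card_univ, smul_eq_mul]
end
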